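/- Let R be a commutative ring, A an associative unital R-algebra, and (θ; x₁, …, xₙ; y₁, …, yₙ) a Frobenius system for A over R such that (x₁, …, xₙ) is an R-basis of A. Let μ be an R-algebra automorphism of A satisfying θ(c·a) = θ(μ(a)·c) for all a, c ∈ A (a Nakayama automorphism), and set ω := ∑ᵢ μ(xᵢ)·yᵢ (the different of A over R). Then the Hattori–Stallings trace tr : A → R, defined by tr(a) = ∑ᵢ θ(yᵢ·a·xᵢ), satisfies tr(a) = θ(ω·a) for all a ∈ A. -/

import Mathlib

/-- **The Hattori–Stallings trace of a free Frobenius algebra is `θ · ω` where `ω` is the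
different.** If `(θ; x; y)` is a Frobenius system for the `R`-algebra `A` with `x` an
`R`-basis, and `μ` is a Nakayama automorphism (`θ (c * a) = θ (μ a * c)`), then with
`ω := ∑ i, μ (xᵢ) * yᵢ` one has `∑ i, θ (yᵢ * a * xᵢ) = θ (ω * a)` for all `a`. -/
theorem stmt3 {R A : Type*} [CommRing R] [Ring A] [Algebra R A]
    {n : ℕ} (θ : A →ₗ[R] R) (x y : Fin n → A)
    (h1 : ∀ a : A, ∑ i, θ (y i * a) • x i = a)
    (h2 : ∀ a : A, ∑ i, θ (a * x i) • y i = a)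
    (b : Module.Basis (Fin n) R A) (hb : ∀ i, b i = x i)
    (μ : A ≃ₐ[R] A) (hμ : ∀ a c : A, θ (c * a) = θ (μ a * c)) :
    ∀ a : A, ∑ i, θ (y i * a * x i) = θ ((∑ i, μ (x i) * y i) * a) := by
  intro a
  rw [Finset.sum_mul, map_sum]
  refine Finset.sum_congr rfl fun i _ => ?_
  rw [hμ (x i) (y i * a), mul_assoc]
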